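/- Let k be a commutative ring, H a bialgebra over k, A a unital associative k-algebra, and V an invertible element of A ⊗ H satisfying (id_A ⊗ Δ)(V) = V₁₂V₁₃ in A ⊗ H ⊗ H. Let H' be another unital k-algebra, α : H → H ⊗ H' an algebra homomorphism, and W an invertible element of A ⊗ H' such that (id_A ⊗ α)(V) = V₁₂W₁₃ in A ⊗ H ⊗ H'. Then for every T ∈ A satisfying W(T ⊗ 1_{H'}) = (T ⊗ 1_{H'})W, the element Y := V(T ⊗ 1_H)V⁻¹ of A ⊗ H satisfies (id_A ⊗ α)(Y) = Y₁₂ in A ⊗ H ⊗ H' (i.e. Y is coinvariant for id_A ⊗ α). -/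

import Mathlib

open TensorProduct

set_option maxHeartbeats 1000000

/-- Let `H` be a bialgebra over a commutative ring `k`, `A` a unital
associative `k`-algebra, and `V` an invertible element of `A ⊗ H` satisfying the
corepresentation identity `(id_A ⊗ Δ)(V) = V₁₂V₁₃`.  Let `H'` be another unital
`k`-algebra, `α : H → H ⊗ H'` an algebra homomorphism and `W` an invertible element
of `A ⊗ H'` such that `(id_A ⊗ α)(V) = V₁₂W₁₃` in `A ⊗ H ⊗ H'`.  Then for every
`T ∈ A` commuting with `W` (in the sense `W(T ⊗ 1) = (T ⊗ 1)W`), the element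
`Y = V(T ⊗ 1)V⁻¹` is coinvariant: `(id_A ⊗ α)(Y) = Y₁₂`. -/
theorem conjugate_is_coinvariant
    (k : Type*) [CommRing k]
    (H : Type*) [Ring H] [Bialgebra k H]
    (A : Type*) [Ring A] [Algebra k A]
    (H' : Type*) [Ring H'] [Algebra k H']
    (V Vinv : A ⊗[k] H)
    (hVr : V * Vinv = 1) (hVl : Vinv * V = 1)
    -- the corepresentation identity `(id_A ⊗ Δ)(V) = V₁₂ V₁₃` in `A ⊗ (H ⊗ H)`
    (hcorep :
      Algebra.TensorProduct.map (AlgHom.id k A) (Bialgebra.comulAlgHom k H) V =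
        Algebra.TensorProduct.map (AlgHom.id k A)
            (Algebra.TensorProduct.includeLeft : H →ₐ[k] H ⊗[k] H) V *
          Algebra.TensorProduct.map (AlgHom.id k A)
            (Algebra.TensorProduct.includeRight : H →ₐ[k] H ⊗[k] H) V)
    (α : H →ₐ[k] H ⊗[k] H')
    (W Winv : A ⊗[k] H')
    (hWr : W * Winv = 1) (hWl : Winv * W = 1)
    -- `(id_A ⊗ α)(V) = V₁₂ W₁₃` in `A ⊗ (H ⊗ H')`
    (hαV :
      Algebra.TensorProduct.map (AlgHom.id k A) α V =
        Algebra.TensorProduct.map (AlgHom.id k A)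
            (Algebra.TensorProduct.includeLeft : H →ₐ[k] H ⊗[k] H') V *
          Algebra.TensorProduct.map (AlgHom.id k A)
            (Algebra.TensorProduct.includeRight : H' →ₐ[k] H ⊗[k] H') W)
    (T : A)
    -- `T` commutes with `W`: `W(T ⊗ 1) = (T ⊗ 1)W`
    (hT : W * (Algebra.TensorProduct.includeLeft : A →ₐ[k] A ⊗[k] H') T =
        (Algebra.TensorProduct.includeLeft : A →ₐ[k] A ⊗[k] H') T * W) :
    -- conclusion: `Y := V(T ⊗ 1)V⁻¹` satisfies `(id_A ⊗ α)(Y) = Y₁₂`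
    Algebra.TensorProduct.map (AlgHom.id k A) α
        (V * (Algebra.TensorProduct.includeLeft : A →ₐ[k] A ⊗[k] H) T * Vinv) =
      Algebra.TensorProduct.map (AlgHom.id k A)
        (Algebra.TensorProduct.includeLeft : H →ₐ[k] H ⊗[k] H')
        (V * (Algebra.TensorProduct.includeLeft : A →ₐ[k] A ⊗[k] H) T * Vinv) := by
  set F := Algebra.TensorProduct.map (AlgHom.id k A) α with hF
  set L := Algebra.TensorProduct.map (AlgHom.id k A)
      (Algebra.TensorProduct.includeLeft : H →ₐ[k] H ⊗[k] H') with hL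
  set R := Algebra.TensorProduct.map (AlgHom.id k A)
      (Algebra.TensorProduct.includeRight : H' →ₐ[k] H ⊗[k] H') with hR
  set T' := (Algebra.TensorProduct.includeLeft : A →ₐ[k] A ⊗[k] H) T with hT'
  -- images of T ⊗ 1 under the various maps
  have hFT : F T' = T ⊗ₜ[k] (1 : H ⊗[k] H') := by
    simp [hF, hT', Algebra.TensorProduct.includeLeft_apply,
      ← Algebra.TensorProduct.one_def]
  have hLT : L T' = T ⊗ₜ[k] (1 : H ⊗[k] H') := by
    simp [hL, hT', Algebra.TensorProduct.includeLeft_apply,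
      ← Algebra.TensorProduct.one_def]
  have hRT : R ((Algebra.TensorProduct.includeLeft : A →ₐ[k] A ⊗[k] H') T)
      = T ⊗ₜ[k] (1 : H ⊗[k] H') := by
    simp [hR, Algebra.TensorProduct.includeLeft_apply,
      ← Algebra.TensorProduct.one_def]
  set t := T ⊗ₜ[k] (1 : H ⊗[k] H') with ht
  -- commutation of R W with T ⊗ 1
  have hcomm : R W * t = t * R W := by
    have := congrArg R hT
    rw [map_mul, map_mul, hRT] at this
    exact this
  have hRWr : R W * R Winv = 1 := by rw [← map_mul, hWr, map_one]
  have hLVr : L V * L Vinv = 1 := by rw [← map_mul, hVr, map_one]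
  have hFVl : F Vinv * F V = 1 := by rw [← map_mul, hVl, map_one]
  -- F Vinv = R Winv * L Vinv, by uniqueness of two-sided inverses
  have h1 : F V * (R Winv * L Vinv) = 1 := by
    rw [hαV, mul_assoc, ← mul_assoc (R W), hRWr, one_mul, hLVr]
  have hFinv : F Vinv = R Winv * L Vinv := by
    calc F Vinv = F Vinv * (F V * (R Winv * L Vinv)) := by rw [h1, mul_one]
      _ = (F Vinv * F V) * (R Winv * L Vinv) := by rw [mul_assoc]
      _ = R Winv * L Vinv := by rw [hFVl, one_mul]
  calc F (V * T' * Vinv) = F V * F T' * F Vinv := by rw [map_mul, map_mul]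
    _ = (L V * R W) * t * (R Winv * L Vinv) := by rw [hαV, hFT, hFinv]
    _ = L V * (R W * t) * (R Winv * L Vinv) := by rw [mul_assoc (L V)]
    _ = L V * (t * R W) * (R Winv * L Vinv) := by rw [hcomm]
    _ = L V * (t * (R W * (R Winv * L Vinv))) := by simp only [mul_assoc]
    _ = L V * (t * L Vinv) := by rw [← mul_assoc (R W), hRWr, one_mul]
    _ = L V * L T' * L Vinv := by rw [hLT, mul_assoc]
    _ = L (V * T' * Vinv) := by rw [map_mul, map_mul]
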